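/- (Squeeze lemma, Lemma 1 of the paper.) Let 0 < t < y and suppose μ̂ ∈ ℝ satisfies E₁(μ̂, t) = y (i.e. μ̂ is a maximum conditional-likelihood estimate, solving y = μ̂ + (φ(t−μ̂) − φ(−t−μ̂))/Z₁(μ̂,t)). Then y − t ≤ μ̂ ≤ y. In other words, the truncated Gaussian estimator is squeezed between the soft-thresholding value y − t and the hard-thresholding value y. -/

import Mathlib

open MeasureTheory Real Filter Set

/-- Standard Gaussian density `φ(x) = (2π)^{-1/2} exp(-x²/2)`. -/
noncomputable def gpdf (x : ℝ) : ℝ := (Real.sqrt (2 * Real.pi))⁻¹ * Real.exp (-x ^ 2 / 2)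

/-- Standard Gaussian CDF `Φ(x)`. -/
noncomputable def gcdf (x : ℝ) : ℝ := ∫ t in Set.Iic x, gpdf t

/-- Normalizing constant `Z₁(μ,t) = 1 - Φ(t-μ) + Φ(-t-μ)`. -/
noncomputable def Z1 (μ t : ℝ) : ℝ := 1 - gcdf (t - μ) + gcdf (-t - μ)

/-- Mean of `N(μ,1)` conditioned on the two-sided tail `(-∞,-t] ∪ [t,∞)`. -/
noncomputable def E1 (μ t : ℝ) : ℝ :=
  (Z1 μ t)⁻¹ * ∫ x in {x : ℝ | t ≤ |x|}, x * gpdf (x - μ)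

lemma sqrt_two_pi_pos : 0 < Real.sqrt (2 * Real.pi) :=
  Real.sqrt_pos.2 (by positivity)

lemma gpdf_pos (x : ℝ) : 0 < gpdf x := by
  unfold gpdf; positivity

lemma gpdf_even (x : ℝ) : gpdf (-x) = gpdf x := by
  unfold gpdf; ring_nf

lemma continuous_gpdf : Continuous gpdf := by
  unfold gpdf
  exact continuous_const.mul ((continuous_pow 2).neg.div_const 2).rexp

lemma gpdf_eq (x : ℝ) : gpdf x = (Real.sqrt (2 * Real.pi))⁻¹ * Real.exp (-(1/2) * x ^ 2) := by
  unfold gpdf; ring_nf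

lemma integrable_gpdf : Integrable gpdf := by
  have : Integrable (fun x : ℝ => Real.exp (-(1/2) * x ^ 2)) := integrable_exp_neg_mul_sq (by norm_num)
  have h := this.const_mul (Real.sqrt (2 * Real.pi))⁻¹
  have : gpdf = fun x => (Real.sqrt (2 * Real.pi))⁻¹ * Real.exp (-(1/2) * x ^ 2) :=
    funext gpdf_eq
  rw [this]
  exact h

lemma integral_gpdf : ∫ x, gpdf x = 1 := by
  simp only [gpdf_eq]
  rw [MeasureTheory.integral_const_mul, integral_gaussian]
  rw [show Real.pi / (1/2) = 2 * Real.pi by ring]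
  exact inv_mul_cancel₀ (ne_of_gt sqrt_two_pi_pos)

lemma gpdf_le_gpdf {x y : ℝ} (h : x ^ 2 ≤ y ^ 2) : gpdf y ≤ gpdf x := by
  unfold gpdf
  have := Real.exp_le_exp.2 (by linarith : -y ^ 2 / 2 ≤ -x ^ 2 / 2)
  exact mul_le_mul_of_nonneg_left this (le_of_lt (inv_pos.2 sqrt_two_pi_pos))

lemma gpdf_lt_gpdf {x y : ℝ} (h : x ^ 2 < y ^ 2) : gpdf y < gpdf x := by
  unfold gpdf
  have := Real.exp_lt_exp.2 (by linarith : -y ^ 2 / 2 < -x ^ 2 / 2)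
  exact mul_lt_mul_of_pos_left this (inv_pos.2 sqrt_two_pi_pos)

-- x * gpdf x ≤ 1/4
lemma mul_gpdf_le (x : ℝ) : x * gpdf x ≤ 1 / 4 := by
  rcases le_or_gt x 0 with hx | hx
  · have := gpdf_pos x
    nlinarith
  · -- x * exp(-x²/2) ≤ exp(-1/2)
    have h1 : x * Real.exp (-x ^ 2 / 2) ≤ Real.exp (-(1:ℝ)/2) := by
      have h2 : x ≤ Real.exp ((x ^ 2 - 1) / 2) := by
        have := Real.add_one_le_exp ((x ^ 2 - 1) / 2)
        nlinarith [sq_nonneg (x-1)]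
      calc x * Real.exp (-x ^ 2 / 2) ≤ Real.exp ((x ^ 2 - 1)/2) * Real.exp (-x ^ 2 / 2) :=
            mul_le_mul_of_nonneg_right h2 (Real.exp_pos _).le
        _ = Real.exp (-(1:ℝ)/2) := by rw [← Real.exp_add]; ring_nf
    -- exp(-1/2) / sqrt(2π) ≤ 1/4  ⟺  4 ≤ exp(1/2)√(2π) ⟺ 16 ≤ e·2π ⟸ 8 ≤ eπ
    have h3 : (Real.sqrt (2 * Real.pi))⁻¹ * Real.exp (-(1:ℝ)/2) ≤ 1/4 := by
      rw [inv_mul_le_iff₀ sqrt_two_pi_pos]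
      have he : Real.exp (-(1:ℝ)/2) = (Real.exp (1/2))⁻¹ := by
        rw [← Real.exp_neg]; norm_num
      rw [he]
      rw [inv_le_iff_one_le_mul₀ (Real.exp_pos _)]
      have h4 : (4:ℝ) ≤ Real.exp (1/2) * Real.sqrt (2 * Real.pi) := by
        have e1 : Real.exp (1/2 : ℝ) ^ 2 = Real.exp 1 := by
          rw [← Real.exp_nat_mul]; norm_num
        have s1 : Real.sqrt (2 * Real.pi) ^ 2 = 2 * Real.pi :=
          Real.sq_sqrt (by positivity)
        have he1 : (2.7182818283 : ℝ) ≤ Real.exp 1 := Real.exp_one_gt_d9.le.trans' (by norm_num)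
        have hpi : (3.14159 : ℝ) ≤ Real.pi := Real.pi_gt_d6.le.trans' (by norm_num)
        nlinarith [Real.exp_pos (1/2:ℝ), sqrt_two_pi_pos]
      nlinarith [Real.exp_pos (1/2:ℝ), sqrt_two_pi_pos]
    calc x * gpdf x = (Real.sqrt (2 * Real.pi))⁻¹ * (x * Real.exp (-x ^ 2 / 2)) := by
          unfold gpdf; ring
      _ ≤ (Real.sqrt (2 * Real.pi))⁻¹ * Real.exp (-(1:ℝ)/2) :=
          mul_le_mul_of_nonneg_left h1 (inv_pos.2 sqrt_two_pi_pos).le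
      _ ≤ 1/4 := h3


lemma integrable_id_mul_gpdf : Integrable (fun x => x * gpdf x) := by
  have hmaj : Integrable (fun x : ℝ => (Real.sqrt (2 * Real.pi))⁻¹ * Real.exp (-(1/4) * x ^ 2)) :=
    (integrable_exp_neg_mul_sq (by norm_num)).const_mul _
  refine hmaj.mono' ((continuous_id.mul continuous_gpdf).aestronglyMeasurable) ?_
  refine ae_of_all _ fun x => ?_
  have hx : |x| ≤ Real.exp (x ^ 2 / 4) := by
    have h := Real.add_one_le_exp (x ^ 2 / 4)
    nlinarith [sq_nonneg (|x| - 2), abs_nonneg x, sq_abs x]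
  have heq : |x * gpdf x| = |x| * ((Real.sqrt (2 * Real.pi))⁻¹ * Real.exp (-x ^ 2 / 2)) := by
    rw [abs_mul]; unfold gpdf
    congr 1
    rw [abs_of_pos (by positivity)]
  rw [Real.norm_eq_abs, heq]
  calc |x| * ((Real.sqrt (2 * Real.pi))⁻¹ * Real.exp (-x ^ 2 / 2))
      ≤ Real.exp (x ^ 2 / 4) * ((Real.sqrt (2 * Real.pi))⁻¹ * Real.exp (-x ^ 2 / 2)) := by
        apply mul_le_mul_of_nonneg_right hx; positivity
    _ = (Real.sqrt (2 * Real.pi))⁻¹ * Real.exp (-(1/4) * x ^ 2) := by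
        rw [← mul_assoc, mul_comm (Real.exp _), mul_assoc, ← Real.exp_add]; ring_nf

lemma hasDerivAt_gpdf (x : ℝ) : HasDerivAt gpdf (-(x * gpdf x)) x := by
  have h1 : HasDerivAt (fun x : ℝ => -x ^ 2 / 2) (-x) x := by
    have := ((hasDerivAt_pow 2 x).neg).div_const 2
    exact this.congr_deriv (by norm_num; ring)
  have h2 := (h1.exp).const_mul (Real.sqrt (2 * Real.pi))⁻¹
  have heq : -(x * gpdf x) = (Real.sqrt (2 * Real.pi))⁻¹ * (Real.exp (-x ^ 2 / 2) * -x) := by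
    unfold gpdf; ring
  rw [heq]
  exact h2

lemma tendsto_gpdf_atTop : Tendsto gpdf atTop (nhds 0) := by
  have h1 : Tendsto (fun x : ℝ => -x ^ 2 / 2) atTop atBot := by
    apply Tendsto.atBot_div_const (by norm_num : (0:ℝ) < 2)
    exact tendsto_neg_atBot_iff.mpr (tendsto_pow_atTop (by norm_num))
  have h2 : Tendsto (fun x : ℝ => Real.exp (-x ^ 2 / 2)) atTop (nhds 0) :=
    Real.tendsto_exp_atBot.comp h1
  have h3 := h2.const_mul (Real.sqrt (2 * Real.pi))⁻¹
  rw [mul_zero] at h3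
  exact h3

lemma tendsto_gpdf_atBot : Tendsto gpdf atBot (nhds 0) := by
  have h0 : Tendsto (fun x : ℝ => x ^ 2) atBot atTop := by
    have habs : Tendsto (fun x : ℝ => |x|) atBot atTop := tendsto_abs_atBot_atTop
    have := (tendsto_pow_atTop (by norm_num : 2 ≠ 0)).comp habs
    refine this.congr fun x => ?_
    simp [Function.comp, sq_abs]
  have h1 : Tendsto (fun x : ℝ => -x ^ 2 / 2) atBot atBot := by
    apply Tendsto.atBot_div_const (by norm_num : (0:ℝ) < 2)
    exact tendsto_neg_atBot_iff.mpr h0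
  have h2 : Tendsto (fun x : ℝ => Real.exp (-x ^ 2 / 2)) atBot (nhds 0) :=
    Real.tendsto_exp_atBot.comp h1
  have h3 := h2.const_mul (Real.sqrt (2 * Real.pi))⁻¹
  rw [mul_zero] at h3
  exact h3


lemma integral_Ioi_gpdf (x : ℝ) : ∫ t in Set.Ioi x, gpdf t = 1 - gcdf x := by
  have h := integral_add_compl (measurableSet_Iic (a := x)) integrable_gpdf
  rw [compl_Iic] at h
  rw [integral_gpdf] at h
  unfold gcdf
  linarith

lemma gcdf_lt_one (x : ℝ) : gcdf x < 1 := by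
  have h := integral_Ioi_gpdf x
  have hpos : 0 < ∫ t in Set.Ioi x, gpdf t := by
    apply setIntegral_pos_iff_support_of_nonneg_ae (ae_of_all _ fun t => (gpdf_pos t).le)
      (integrable_gpdf.integrableOn) |>.mpr
    have : (Function.support gpdf) = Set.univ := by
      ext t; simp [Function.support, (gpdf_pos t).ne']
    rw [this]
    simp [Real.volume_Ioi]
  linarith

lemma gcdf_pos (x : ℝ) : 0 < gcdf x := by
  unfold gcdf
  apply setIntegral_pos_iff_support_of_nonneg_ae (ae_of_all _ fun t => (gpdf_pos t).le)
    (integrable_gpdf.integrableOn) |>.mpr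
  have : (Function.support gpdf) = Set.univ := by
    ext t; simp [Function.support, (gpdf_pos t).ne']
  rw [this]
  simp [Real.volume_Iic]

lemma gcdf_neg (x : ℝ) : gcdf (-x) = 1 - gcdf x := by
  unfold gcdf
  have h1 : ∫ t in Set.Iic (-x), gpdf t = ∫ t in Set.Ioi x, gpdf (-t) := by
    rw [integral_comp_neg_Ioi]
  have h2 : ∫ t in Set.Ioi x, gpdf (-t) = ∫ t in Set.Ioi x, gpdf t := by
    congr 1; ext t; exact gpdf_even t
  rw [h1, h2, integral_Ioi_gpdf]
  rfl

lemma gcdf_sub_gcdf (a b : ℝ) : gcdf b - gcdf a = ∫ t in a..b, gpdf t := by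
  exact intervalIntegral.integral_Iic_sub_Iic integrable_gpdf.integrableOn
    integrable_gpdf.integrableOn

lemma hasDerivAt_gcdf (x : ℝ) : HasDerivAt gcdf (gpdf x) x := by
  have key : ∀ y : ℝ, gcdf y = gcdf 0 + ∫ t in (0:ℝ)..y, gpdf t := by
    intro y
    rw [← gcdf_sub_gcdf]; ring
  have h1 : HasDerivAt (fun y => ∫ t in (0:ℝ)..y, gpdf t) (gpdf x) x := by
    exact intervalIntegral.integral_hasDerivAt_right
      (integrable_gpdf.intervalIntegrable)
      (continuous_gpdf.aestronglyMeasurable.stronglyMeasurableAtFilter)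
      continuous_gpdf.continuousAt
  have h2 := h1.const_add (gcdf 0)
  refine HasDerivAt.congr_of_eventuallyEq h2 ?_
  filter_upwards with y
  exact (key y)

lemma tendsto_gcdf_atTop : Tendsto gcdf atTop (nhds 1) := by
  have := (aecover_Iic (tendsto_id (x := atTop))).integral_tendsto_of_countably_generated
      integrable_gpdf
  rw [integral_gpdf] at this
  exact this

lemma tendsto_gcdf_atBot : Tendsto gcdf atBot (nhds 0) := by
  have h := (aecover_Ioi (tendsto_id (x := atBot))).integral_tendsto_of_countably_generated
      integrable_gpdf
  rw [integral_gpdf] at h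
  have h2 : Tendsto (fun x => 1 - ∫ t in Set.Ioi x, gpdf t) atBot (nhds (1 - 1)) :=
    (tendsto_const_nhds).sub h
  simp only [integral_Ioi_gpdf] at h2
  norm_num at h2
  refine h2.congr fun x => by ring


/-- Monotonicity helper. -/
lemma le_of_hasDerivAt {f f' : ℝ → ℝ} (hd : ∀ x, HasDerivAt f (f' x) x) {c b : ℝ}
    (hcb : c ≤ b) (h0 : ∀ x, c ≤ x → x ≤ b → 0 ≤ f' x) : f c ≤ f b := by
  have hmono : MonotoneOn f (Set.Icc c b) := by
    apply monotoneOn_of_deriv_nonneg (convex_Icc c b)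
    · exact fun x _ => ((hd x).continuousAt).continuousWithinAt
    · exact fun x _ => ((hd x).differentiableAt).differentiableWithinAt
    · intro x hx
      rw [interior_Icc] at hx
      rw [(hd x).deriv]
      exact h0 x hx.1.le hx.2.le
  exact hmono (Set.left_mem_Icc.2 hcb) (Set.right_mem_Icc.2 hcb) hcb

lemma gcdf_mono {a b : ℝ} (h : a ≤ b) : gcdf a ≤ gcdf b := by
  have := gcdf_sub_gcdf a b
  have hnn : 0 ≤ ∫ t in a..b, gpdf t :=
    intervalIntegral.integral_nonneg h (fun t _ => (gpdf_pos t).le)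
  linarith

lemma gcdf_zero : gcdf 0 = 1/2 := by
  have := gcdf_neg 0
  rw [neg_zero] at this
  linarith

/-- A3: for `0 ≤ c ≤ b`, `(b - c) * gpdf b ≤ gcdf (-c) - gcdf (-b)`. -/
lemma claimA3 {c b : ℝ} (hc : 0 ≤ c) (hcb : c ≤ b) :
    (b - c) * gpdf b ≤ gcdf (-c) - gcdf (-b) := by
  set U : ℝ → ℝ := fun x => (gcdf (-c) - gcdf (-x)) - (x - c) * gpdf x with hU
  have hd : ∀ x, HasDerivAt U ((x - c) * (x * gpdf x)) x := by
    intro x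
    have h1 : HasDerivAt (fun x : ℝ => gcdf (-x)) (-gpdf (-x)) x := by
      have := (hasDerivAt_gcdf (-x)).comp x (hasDerivAt_neg x)
      exact this.congr_deriv (by ring)
    have h2 : HasDerivAt (fun x : ℝ => (x - c) * gpdf x)
        (1 * gpdf x + (x - c) * -(x * gpdf x)) x :=
      ((hasDerivAt_id x).sub_const c).mul (hasDerivAt_gpdf x)
    have h3 := ((h1.const_sub (gcdf (-c))).sub h2)
    exact h3.congr_deriv (by rw [gpdf_even]; ring)
  have := le_of_hasDerivAt hd hcb (fun x hx1 _ =>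
    mul_nonneg (by linarith) (mul_nonneg (le_trans hc hx1) (gpdf_pos x).le))
  simp only [hU] at this
  simp only [neg_neg, sub_self, zero_mul, sub_zero] at this
  linarith

/-- A4: for `0 ≤ c ≤ b`, `gpdf c - gpdf b ≤ (b+c)/2 * (gcdf (-c) - gcdf (-b))`. -/
lemma claimA4 {c b : ℝ} (hc : 0 ≤ c) (hcb : c ≤ b) :
    gpdf c - gpdf b ≤ (b + c) / 2 * (gcdf (-c) - gcdf (-b)) := by
  set T : ℝ → ℝ := fun x => (x + c) / 2 * (gcdf (-c) - gcdf (-x)) - gpdf c + gpdf x with hT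
  have hd : ∀ x, HasDerivAt T
      ((gcdf (-c) - gcdf (-x)) / 2 - (x - c) / 2 * gpdf x) x := by
    intro x
    have h1 : HasDerivAt (fun x : ℝ => gcdf (-c) - gcdf (-x)) (gpdf (-x)) x := by
      have := (hasDerivAt_gcdf (-x)).comp x (hasDerivAt_neg x)
      have h := this.const_sub (gcdf (-c))
      simpa using h
    have h2 : HasDerivAt (fun x : ℝ => (x + c) / 2)  (1/2) x := by
      have := ((hasDerivAt_id x).add_const c).div_const 2
      simpa using this
    have h3 := (h2.mul h1).sub_const (gpdf c) |>.add (hasDerivAt_gpdf x)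
    exact h3.congr_deriv (by rw [gpdf_even]; ring)
  have key := le_of_hasDerivAt hd hcb (fun x hx1 hx2 => by
    have hA3 := claimA3 hc hx1
    linarith)
  simp only [hT] at key
  simp only [neg_neg, sub_self, mul_zero, zero_sub, zero_mul] at key
  linarith

/-- A5: for `0 ≤ a ≤ b`, `gpdf a - gpdf b ≤ (b - a)/4`. -/
lemma claimA5 {a b : ℝ} (hab : a ≤ b) :
    gpdf a - gpdf b ≤ (b - a) / 4 := by
  set Q : ℝ → ℝ := fun x => (x - a) / 4 + gpdf x with hQ
  have hd : ∀ x, HasDerivAt Q (1/4 - x * gpdf x) x := by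
    intro x
    have h1 : HasDerivAt (fun x : ℝ => (x - a) / 4) (1/4) x := by
      have := ((hasDerivAt_id x).sub_const a).div_const 4
      simpa using this
    exact (h1.add (hasDerivAt_gpdf x)).congr_deriv (by ring)
  have key := le_of_hasDerivAt hd hab (fun x _ _ => by
    have := mul_gpdf_le x
    linarith)
  simp only [hQ, sub_self, zero_div, zero_add] at key
  linarith

/-- Main inequality: for `μ ≥ 0`, `t > 0`:
`gpdf (t-μ) - gpdf (t+μ) ≤ t * (gcdf (μ-t) + gcdf (-t-μ))`. -/
lemma main_ineq {μ t : ℝ} (hμ : 0 ≤ μ) (ht : 0 < t) :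
    gpdf (t - μ) - gpdf (t + μ) ≤ t * (gcdf (μ - t) + gcdf (-t - μ)) := by
  rcases le_or_gt μ t with hc | hc
  · -- case μ ≤ t : c = t - μ, b = t + μ
    have h := claimA4 (c := t - μ) (b := t + μ) (by linarith) (by linarith)
    have e1 : -(t - μ) = μ - t := by ring
    have e2 : -(t + μ) = -t - μ := by ring
    rw [e1, e2] at h
    have e3 : (t + μ + (t - μ)) / 2 = t := by ring
    rw [e3] at h
    have hpos := gcdf_pos (-t - μ)
    nlinarith
  · -- case μ > t : a = μ - t ≥ 0
    have h := claimA5 (a := μ - t) (b := μ + t) (by linarith)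
    have e1 : gpdf (t - μ) = gpdf (μ - t) := by
      rw [← gpdf_even (μ - t)]; ring_nf
    have e2 : μ + t - (μ - t) = 2 * t := by ring
    rw [e2] at h
    have h5 : gcdf (μ - t) ≥ 1/2 := by
      rw [← gcdf_zero]
      exact gcdf_mono (by linarith)
    have hpos := gcdf_pos (-t - μ)
    have e4 : gpdf (t + μ) = gpdf (μ + t) := by ring_nf
    rw [e1, e4]
    nlinarith


lemma integrable_mul_gpdf_sub (μ : ℝ) : Integrable (fun x => x * gpdf (x - μ)) := by
  have h1 : Integrable (fun x => (x - μ) * gpdf (x - μ)) :=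
    (integrable_id_mul_gpdf).comp_sub_right μ
  have h2 : Integrable (fun x => μ * gpdf (x - μ)) :=
    ((integrable_gpdf).comp_sub_right μ).const_mul μ
  have := h1.add h2
  refine this.congr (ae_of_all _ fun x => by simp only [Pi.add_apply]; ring)

/-- antiderivative of `x * gpdf (x - μ)` -/
noncomputable def Fa (μ : ℝ) (x : ℝ) : ℝ := μ * gcdf (x - μ) - gpdf (x - μ)

lemma hasDerivAt_Fa (μ x : ℝ) : HasDerivAt (Fa μ) (x * gpdf (x - μ)) x := by
  have hsub : HasDerivAt (fun x : ℝ => x - μ) 1 x := (hasDerivAt_id x).sub_const μ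
  have h1 : HasDerivAt (fun x : ℝ => gcdf (x - μ)) (gpdf (x - μ)) x := by
    have := (hasDerivAt_gcdf (x - μ)).comp x hsub
    exact this.congr_deriv (by ring)
  have h2 : HasDerivAt (fun x : ℝ => gpdf (x - μ)) (-((x - μ) * gpdf (x - μ))) x := by
    have := (hasDerivAt_gpdf (x - μ)).comp x hsub
    exact this.congr_deriv (by ring)
  exact ((h1.const_mul μ).sub h2).congr_deriv (by ring)

lemma tendsto_Fa_atTop (μ : ℝ) : Tendsto (Fa μ) atTop (nhds μ) := by
  have h1 : Tendsto (fun x : ℝ => gcdf (x - μ)) atTop (nhds 1) :=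
    tendsto_gcdf_atTop.comp (tendsto_atTop_add_const_right _ (-μ) tendsto_id |>.congr
      (fun x => by simp [sub_eq_add_neg]))
  have h2 : Tendsto (fun x : ℝ => gpdf (x - μ)) atTop (nhds 0) :=
    tendsto_gpdf_atTop.comp (tendsto_atTop_add_const_right _ (-μ) tendsto_id |>.congr
      (fun x => by simp [sub_eq_add_neg]))
  have := (h1.const_mul μ).sub h2
  simp at this
  exact this

lemma tendsto_Fa_atBot (μ : ℝ) : Tendsto (Fa μ) atBot (nhds 0) := by
  have h1 : Tendsto (fun x : ℝ => gcdf (x - μ)) atBot (nhds 0) :=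
    tendsto_gcdf_atBot.comp (tendsto_atBot_add_const_right _ (-μ) tendsto_id |>.congr
      (fun x => by simp [sub_eq_add_neg]))
  have h2 : Tendsto (fun x : ℝ => gpdf (x - μ)) atBot (nhds 0) :=
    tendsto_gpdf_atBot.comp (tendsto_atBot_add_const_right _ (-μ) tendsto_id |>.congr
      (fun x => by simp [sub_eq_add_neg]))
  have := (h1.const_mul μ).sub h2
  simp at this
  exact this

lemma integral_Ioi_mul_gpdf (μ t : ℝ) :
    ∫ x in Set.Ioi t, x * gpdf (x - μ) = μ * (1 - gcdf (t - μ)) + gpdf (t - μ) := by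
  have h := integral_Ioi_of_hasDerivAt_of_tendsto'
    (f := Fa μ) (f' := fun x => x * gpdf (x - μ)) (a := t) (m := μ)
    (fun x _ => hasDerivAt_Fa μ x)
    ((integrable_mul_gpdf_sub μ).integrableOn)
    (tendsto_Fa_atTop μ)
  rw [h]
  unfold Fa
  ring

lemma integral_Iic_mul_gpdf (μ t : ℝ) :
    ∫ x in Set.Iic t, x * gpdf (x - μ) = μ * gcdf (t - μ) - gpdf (t - μ) := by
  have h := integral_Iic_of_hasDerivAt_of_tendsto'
    (f := Fa μ) (f' := fun x => x * gpdf (x - μ)) (a := t) (m := 0)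
    (fun x _ => hasDerivAt_Fa μ x)
    ((integrable_mul_gpdf_sub μ).integrableOn)
    (tendsto_Fa_atBot μ)
  rw [h]
  unfold Fa
  ring

lemma tail_set_eq (t : ℝ) : {x : ℝ | t ≤ |x|} = Set.Iic (-t) ∪ Set.Ici t := by
  ext x
  simp only [Set.mem_setOf_eq, Set.mem_union, Set.mem_Iic, Set.mem_Ici, le_abs]
  constructor
  · rintro (h | h)
    · right; exact h
    · left; linarith
  · rintro (h | h)
    · right; linarith
    · left; exact h

lemma integral_tail (μ t : ℝ) (ht : 0 < t) :
    ∫ x in {x : ℝ | t ≤ |x|}, x * gpdf (x - μ)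
      = μ * Z1 μ t + gpdf (t - μ) - gpdf (-t - μ) := by
  rw [tail_set_eq t]
  rw [setIntegral_union (by
        rw [Set.disjoint_iff_inter_eq_empty]
        ext x
        simp only [Set.mem_inter_iff, Set.mem_Iic, Set.mem_Ici, Set.mem_empty_iff_false,
          iff_false, not_and, not_le]
        intro h; linarith)
      measurableSet_Ici
      ((integrable_mul_gpdf_sub μ).integrableOn)
      ((integrable_mul_gpdf_sub μ).integrableOn)]
  rw [integral_Iic_mul_gpdf μ (-t)]
  rw [setIntegral_congr_set (Ioi_ae_eq_Ici (a := t)).symm, integral_Ioi_mul_gpdf μ t]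
  unfold Z1
  ring

lemma Z1_pos (μ t : ℝ) : 0 < Z1 μ t := by
  unfold Z1
  have := gcdf_lt_one (t - μ)
  have := gcdf_pos (-t - μ)
  linarith

lemma E1_eq (μ t : ℝ) (ht : 0 < t) :
    E1 μ t = μ + (gpdf (t - μ) - gpdf (-t - μ)) / Z1 μ t := by
  unfold E1
  rw [integral_tail μ t ht]
  field_simp [ne_of_gt (Z1_pos μ t)]
  ring


/-- Squeeze lemma (Lemma 1 of the paper): for `0 < t < y`, any solution `μ̂` of the
maximum conditional-likelihood equation `E₁(μ̂,t) = y` satisfies `y - t ≤ μ̂ ≤ y`;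
i.e. the truncated Gaussian estimator is squeezed between the soft-thresholding
value `y - t` and the hard-thresholding value `y`. -/
theorem truncGauss_estimator_squeeze (t y μhat : ℝ) (ht : 0 < t) (hty : t < y)
    (hsol : E1 μhat t = y) :
    y - t ≤ μhat ∧ μhat ≤ y := by
  rw [E1_eq μhat t ht] at hsol
  have hZ := Z1_pos μhat t
  have hμ : 0 ≤ μhat := by
    by_contra hneg
    push_neg at hneg
    have hlt : gpdf (t - μhat) < gpdf (-t - μhat) := by
      have : gpdf (-t - μhat) = gpdf (t + μhat) := by
        rw [← gpdf_even (t + μhat)]; ring_nf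
      rw [this]
      exact gpdf_lt_gpdf (by nlinarith)
    have hfrac : (gpdf (t - μhat) - gpdf (-t - μhat)) / Z1 μhat t < 0 :=
      div_neg_of_neg_of_pos (by linarith) hZ
    linarith
  have hge : 0 ≤ gpdf (t - μhat) - gpdf (-t - μhat) := by
    have : gpdf (-t - μhat) = gpdf (t + μhat) := by
      rw [← gpdf_even (t + μhat)]; ring_nf
    rw [this]
    have := gpdf_le_gpdf (x := t - μhat) (y := t + μhat) (by nlinarith)
    linarith
  constructor
  · -- y - t ≤ μhat : need (Δ)/Z1 ≤ t
    have hmain := main_ineq hμ ht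
    have hZeq : gcdf (μhat - t) + gcdf (-t - μhat) = Z1 μhat t := by
      unfold Z1
      have : gcdf (μhat - t) = 1 - gcdf (t - μhat) := by
        rw [← gcdf_neg (t - μhat)]; ring_nf
      linarith
    rw [hZeq] at hmain
    have he : gpdf (t + μhat) = gpdf (-t - μhat) := by
      rw [← gpdf_even (t + μhat)]; ring_nf
    rw [he] at hmain
    have : (gpdf (t - μhat) - gpdf (-t - μhat)) / Z1 μhat t ≤ t :=
      (div_le_iff₀ hZ).mpr (by linarith [mul_comm t (Z1 μhat t)])
    linarith
  · -- μhat ≤ y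
    have : 0 ≤ (gpdf (t - μhat) - gpdf (-t - μhat)) / Z1 μhat t :=
      div_nonneg hge hZ.le
    linarith
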